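/- Let λ = (λ_1,...,λ_M) with 0 ≤ λ_1 ≤ ... ≤ λ_M, let β ∈ ℕ^M be a weight vector with Σ_i β_i = Σ_i λ_i, and let β′ be obtained from β by swapping two consecutive entries β_i and β_{i+1}. Then there is a bijection between the set of semistandard Young tableaux of shape λ with entries in {1,...,M} and weight vector β and the set of semistandard Young tableaux of shape λ with entries in {1,...,M} and weight vector β′; in particular these two sets have the same cardinality. -/

import Mathlib

/-- Predicate: `e` is a semistandard filling of shape `lam` (sorted nondecreasingly),
where row `i` (0-indexed from the top) has `lam i.rev` boxes, entries are in `Fin M`,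
rows weakly increase and columns strictly increase downwards. -/
def IsSSYT {M : ℕ} (lam : Fin M → ℕ) (e : ∀ i : Fin M, Fin (lam i.rev) → Fin M) : Prop :=
  (∀ (i : Fin M) (j j' : Fin (lam i.rev)), j ≤ j' → e i j ≤ e i j') ∧
  (∀ (i i' : Fin M), i < i' → ∀ (j : Fin (lam i'.rev)) (hj : (j : ℕ) < lam i.rev),
      e i ⟨j, hj⟩ < e i' j)

instance {M : ℕ} (lam : Fin M → ℕ) : DecidablePred (IsSSYT lam) := fun _ => by
  unfold IsSSYT; infer_instance

/-- Semistandard Young tableaux of shape `lam` (sorted nondecreasingly) with entries in `Fin M`. -/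
def SSYT (M : ℕ) (lam : Fin M → ℕ) : Type :=
  {e : ∀ i : Fin M, Fin (lam i.rev) → Fin M // IsSSYT lam e}

instance {M : ℕ} (lam : Fin M → ℕ) : Fintype (SSYT M lam) :=
  Subtype.fintype _

/-- The weight vector of a tableau: `T.weight k` is the number of boxes containing entry `k`. -/
def SSYT.weight {M : ℕ} {lam : Fin M → ℕ} (T : SSYT M lam) (k : Fin M) : ℕ :=
  ∑ i : Fin M, (Finset.univ.filter fun j : Fin (lam i.rev) => T.1 i j = k).card

/-- The Schur polynomial of shape `lam` via Young's rule (sum over all SSYTs of the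
monomials given by the weight vectors). -/
noncomputable def schur (M : ℕ) (lam : Fin M → ℕ) (z : Fin M → ℂ) : ℂ :=
  ∑ T : SSYT M lam, ∏ i : Fin M, z i ^ T.weight i


namespace BK

open Finset

/-- A downward-closed subset of `Fin n` is an initial segment. -/
lemma mem_iff_lt_card {n : ℕ} (S : Finset (Fin n))
    (hS : ∀ p q : Fin n, q ≤ p → p ∈ S → q ∈ S) (p : Fin n) : p ∈ S ↔ (p : ℕ) < S.card := by
  constructor
  · intro hp
    have h1 : Finset.Iic p ⊆ S := fun q hq => hS p q (Finset.mem_Iic.mp hq) hp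
    have := Finset.card_le_card h1
    rw [Fin.card_Iic] at this
    omega
  · intro h
    by_contra hp
    have h1 : S ⊆ Finset.Iio p := by
      intro q hq
      rw [Finset.mem_Iio]
      rcases lt_or_ge q p with h' | h'
      · exact h'
      · exact absurd (hS q p h' hq) hp
    have := Finset.card_le_card h1
    rw [Fin.card_Iio] at this
    omega

lemma card_filter_lt {n m : ℕ} (h : m ≤ n) :
    ((Finset.univ : Finset (Fin n)).filter fun p : Fin n => (p : ℕ) < m).card = m := by
  apply Finset.card_eq_of_bijective (fun k hk => (⟨k, lt_of_lt_of_le hk h⟩ : Fin n))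
  · intro a ha
    simp only [Finset.mem_filter, Finset.mem_univ, true_and] at ha
    exact ⟨a, ha, rfl⟩
  · intro k hk
    simp [hk]
  · intro k k' hk hk' hkk'
    simpa [Fin.ext_iff] using hkk'

variable {M : ℕ} (lam : Fin M → ℕ)

/-- number of entries `< r` in row `j`. -/
def cnt (e : ∀ i : Fin M, Fin (lam i.rev) → Fin M) (j : Fin M) (r : ℕ) : ℕ :=
  (Finset.univ.filter fun p : Fin (lam j.rev) => (e j p : ℕ) < r).card

lemma cnt_mono (e : ∀ i : Fin M, Fin (lam i.rev) → Fin M) (j : Fin M) {r r' : ℕ} (h : r ≤ r') :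
    cnt lam e j r ≤ cnt lam e j r' :=
  Finset.card_le_card (by intro p hp; simp only [Finset.mem_filter, Finset.mem_univ, true_and] at *; omega)

lemma cnt_le_len (e : ∀ i : Fin M, Fin (lam i.rev) → Fin M) (j : Fin M) (r : ℕ) :
    cnt lam e j r ≤ lam j.rev := by
  simpa [cnt] using Finset.card_filter_le (Finset.univ : Finset (Fin (lam j.rev))) _

/-- prefix property for weakly increasing rows. -/
lemma lt_cnt_iff (e : ∀ i : Fin M, Fin (lam i.rev) → Fin M)
    (hW : ∀ (j : Fin M) (p p' : Fin (lam j.rev)), p ≤ p' → e j p ≤ e j p')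
    (j : Fin M) (r : ℕ) (p : Fin (lam j.rev)) :
    (p : ℕ) < cnt lam e j r ↔ (e j p : ℕ) < r := by
  rw [cnt, ← mem_iff_lt_card]
  · simp
  · intro a b hba ha
    simp only [Finset.mem_filter, Finset.mem_univ, true_and] at *
    exact lt_of_le_of_lt (hW j b a hba) ha

lemma cnt_eq_of_iff (e : ∀ i : Fin M, Fin (lam i.rev) → Fin M) (j : Fin M) (r m : ℕ)
    (hm : m ≤ lam j.rev) (h : ∀ p : Fin (lam j.rev), (e j p : ℕ) < r ↔ (p : ℕ) < m) :
    cnt lam e j r = m := by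
  rw [cnt]
  rw [show (Finset.univ.filter fun p : Fin (lam j.rev) => (e j p : ℕ) < r)
      = Finset.univ.filter (fun p : Fin (lam j.rev) => (p : ℕ) < m) from Finset.filter_congr (by
    intro p _; simp only [h p, eq_iff_iff])]
  exact card_filter_lt hm

/-- strictness between a row and the one above it gives the count inequality. -/
lemma cnt_pair (e : ∀ i : Fin M, Fin (lam i.rev) → Fin M) {j j' : Fin M} (hjj' : j < j')
    (hL : lam j'.rev ≤ lam j.rev)
    (hS : ∀ (p : Fin (lam j'.rev)) (hp : (p : ℕ) < lam j.rev), e j ⟨p, hp⟩ < e j' p)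
    (r : ℕ) : cnt lam e j' (r + 1) ≤ cnt lam e j r := by
  classical
  unfold cnt
  apply Finset.card_le_card_of_injOn
    (fun p : Fin (lam j'.rev) => (⟨(p : ℕ), lt_of_lt_of_le p.2 hL⟩ : Fin (lam j.rev)))
  · intro p hp
    simp only [Finset.mem_coe, Finset.mem_filter, Finset.mem_univ, true_and] at *
    have := hS p (lt_of_lt_of_le p.2 hL)
    rw [Fin.lt_def] at this
    omega
  · intro a _ b _ hab
    have : (a : ℕ) = (b : ℕ) := by simpa [Fin.ext_iff] using hab
    exact Fin.ext this

/-- converse: count inequalities give pointwise strictness. -/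
lemma strict_of_cnt (e : ∀ i : Fin M, Fin (lam i.rev) → Fin M)
    (hW : ∀ (j : Fin M) (p p' : Fin (lam j.rev)), p ≤ p' → e j p ≤ e j p')
    {j j' : Fin M}
    (hC : ∀ r, cnt lam e j' (r + 1) ≤ cnt lam e j r)
    (p : Fin (lam j'.rev)) (hp : (p : ℕ) < lam j.rev) : e j ⟨p, hp⟩ < e j' p := by
  have h1 : (p : ℕ) < cnt lam e j' ((e j' p : ℕ) + 1) :=
    (lt_cnt_iff lam e hW j' _ p).2 (by omega)
  have h2 : (p : ℕ) < cnt lam e j (e j' p : ℕ) := lt_of_lt_of_le h1 (hC _)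
  have := (lt_cnt_iff lam e hW j _ ⟨p, hp⟩).1 h2
  rwa [Fin.lt_def]

/-- adjacent strictness implies strictness between all pairs of rows. -/
lemma strict_of_adj (e : ∀ i : Fin M, Fin (lam i.rev) → Fin M) (hmono : Monotone lam)
    (hadj : ∀ (j' : Fin M) (h0 : 0 < (j' : ℕ)) (p : Fin (lam j'.rev))
      (hp : (p : ℕ) < lam (⟨(j' : ℕ) - 1, lt_of_le_of_lt (Nat.sub_le _ _) j'.isLt⟩ : Fin M).rev),
      e ⟨(j' : ℕ) - 1, lt_of_le_of_lt (Nat.sub_le _ _) j'.isLt⟩ ⟨p, hp⟩ < e j' p) :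
    ∀ (i i' : Fin M), i < i' → ∀ (p : Fin (lam i'.rev)) (hp : (p : ℕ) < lam i.rev),
      e i ⟨p, hp⟩ < e i' p := by
  have key : ∀ n : ℕ, ∀ (i i' : Fin M), (i' : ℕ) = n → i < i' →
      ∀ (p : Fin (lam i'.rev)) (hp : (p : ℕ) < lam i.rev), e i ⟨p, hp⟩ < e i' p := by
    intro n
    induction n using Nat.strong_induction_on with
    | _ n IH =>
      intro i i' hn hlt p hp
      have h0 : 0 < (i' : ℕ) := lt_of_le_of_lt (Nat.zero_le _) hlt
      by_cases hone : (i : ℕ) + 1 = (i' : ℕ)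
      · have hpred : (⟨(i' : ℕ) - 1, lt_of_le_of_lt (Nat.sub_le _ _) i'.isLt⟩ : Fin M) = i :=
          Fin.ext (show (i' : ℕ) - 1 = (i : ℕ) by omega)
        subst hpred
        exact hadj i' h0 p hp
      · have hmidlt : (i' : ℕ) - 1 < M := lt_of_le_of_lt (Nat.sub_le _ _) i'.isLt
        set mid : Fin M := ⟨(i' : ℕ) - 1, hmidlt⟩ with hmid
        have himid : i < mid := by
          rw [Fin.lt_def]; show (i : ℕ) < (i' : ℕ) - 1; omega
        have hLmid : lam i'.rev ≤ lam mid.rev := by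
          apply hmono
          rw [Fin.rev_le_rev]
          show (i' : ℕ) - 1 ≤ (i' : ℕ)
          omega
        have hpmid : (p : ℕ) < lam mid.rev := lt_of_lt_of_le p.2 hLmid
        have step1 : e i ⟨p, hp⟩ < e mid ⟨(p : ℕ), hpmid⟩ := by
          have := IH ((i' : ℕ) - 1) (by omega) i mid rfl himid ⟨(p : ℕ), hpmid⟩ hp
          exact this
        have step2 : e mid ⟨(p : ℕ), hpmid⟩ < e i' p := hadj i' h0 p hpmid
        exact lt_trans step1 step2
  intro i i' hlt p hp
  exact key (i' : ℕ) i i' rfl hlt p hp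


section BKdefs

variable {M : ℕ} (lam : Fin M → ℕ) (e : ∀ i : Fin M, Fin (lam i.rev) → Fin M) (v : ℕ)

def loB (j : Fin M) : ℕ :=
  max (cnt lam e j v) (if h : (j : ℕ) + 1 < M then cnt lam e ⟨(j : ℕ) + 1, h⟩ (v + 2) else 0)

def hiB (j : Fin M) : ℕ :=
  if h : 0 < (j : ℕ) then
    min (cnt lam e j (v + 2))
      (cnt lam e ⟨(j : ℕ) - 1, lt_of_le_of_lt (Nat.sub_le _ _) j.isLt⟩ v)
  else cnt lam e j (v + 2)

def newX (j : Fin M) : ℕ := loB lam e v j + hiB lam e v j - cnt lam e j (v + 1)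

def bk (hv : v + 1 < M) : ∀ j : Fin M, Fin (lam j.rev) → Fin M :=
  fun j p =>
    if v ≤ (e j p : ℕ) ∧ (e j p : ℕ) < v + 2 then
      (if (p : ℕ) < newX lam e v j then ⟨v, by omega⟩ else ⟨v + 1, hv⟩)
    else e j p

lemma bk_eq (hv : v + 1 < M) (j : Fin M) (p : Fin (lam j.rev)) :
    bk lam e v hv j p =
      if v ≤ (e j p : ℕ) ∧ (e j p : ℕ) < v + 2 then
        (if (p : ℕ) < newX lam e v j then ⟨v, by omega⟩ else ⟨v + 1, hv⟩)
      else e j p := rfl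

lemma cnt_pair' (hmono : Monotone lam) (he : IsSSYT lam e) {j j' : Fin M} (hjj' : j < j') (r : ℕ) :
    cnt lam e j' (r + 1) ≤ cnt lam e j r :=
  cnt_pair lam e hjj' (hmono (Fin.rev_le_rev.mpr hjj'.le))
    (fun p hp => he.2 j j' hjj' p hp) r

lemma loB_le (hmono : Monotone lam) (he : IsSSYT lam e) (j : Fin M) : loB lam e v j ≤ cnt lam e j (v + 1) := by
  unfold loB
  apply max_le (cnt_mono lam e j (by omega))
  split
  · next h =>
    exact cnt_pair' lam e hmono he
      (show j < (⟨(j : ℕ) + 1, h⟩ : Fin M) from by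
        rw [Fin.lt_def]; exact Nat.lt_succ_self _) (v + 1)
  · exact Nat.zero_le _

lemma le_hiB (hmono : Monotone lam) (he : IsSSYT lam e) (j : Fin M) : cnt lam e j (v + 1) ≤ hiB lam e v j := by
  unfold hiB
  split
  · next h =>
    refine le_min (cnt_mono lam e j (by omega)) ?_
    exact cnt_pair' lam e hmono he
      (show (⟨(j : ℕ) - 1, lt_of_le_of_lt (Nat.sub_le _ _) j.isLt⟩ : Fin M) < j from by
        rw [Fin.lt_def]; show (j : ℕ) - 1 < (j : ℕ); omega) v
  · exact cnt_mono lam e j (by omega)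

lemma A_le_loB (j : Fin M) : cnt lam e j v ≤ loB lam e v j := le_max_left _ _

lemma hiB_le_C (j : Fin M) : hiB lam e v j ≤ cnt lam e j (v + 2) := by
  unfold hiB; split
  · exact min_le_left _ _
  · exact le_rfl

lemma newX_bounds (hmono : Monotone lam) (he : IsSSYT lam e) (j : Fin M) :
    loB lam e v j ≤ newX lam e v j ∧ newX lam e v j ≤ hiB lam e v j := by
  have h1 := loB_le lam e v hmono he j
  have h2 := le_hiB lam e v hmono he j
  unfold newX
  omega

lemma bk_lt_succ_iff (hmono : Monotone lam) (he : IsSSYT lam e) (hv : v + 1 < M)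
    (j : Fin M) (p : Fin (lam j.rev)) :
    ((bk lam e v hv j p : ℕ) < v + 1) ↔ (p : ℕ) < newX lam e v j := by
  have hb := newX_bounds lam e v hmono he j
  have hA := A_le_loB lam e v j
  have hC := hiB_le_C lam e v j
  unfold bk
  split
  · next h =>
    split
    · next h2 => exact iff_of_true (Nat.lt_succ_self v) h2
    · next h2 => exact iff_of_false (lt_irrefl (v + 1)) h2
  · next h =>
    rcases Nat.lt_or_ge (e j p : ℕ) v with hlt | hge
    · have hpA : (p : ℕ) < cnt lam e j v := (lt_cnt_iff lam e he.1 j v p).2 hlt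
      exact iff_of_true (by omega) (by omega)
    · have hge2 : v + 2 ≤ (e j p : ℕ) := by
        rcases Nat.lt_or_ge (e j p : ℕ) (v + 2) with h' | h'
        · exact absurd ⟨hge, h'⟩ h
        · exact h'
      have hpC : ¬ (p : ℕ) < cnt lam e j (v + 2) := by
        rw [lt_cnt_iff lam e he.1]; omega
      exact iff_of_false (by omega) (by omega)

lemma bk_lt_iff_low (hv : v + 1 < M) (j : Fin M) (p : Fin (lam j.rev)) {r : ℕ} (hr : r ≤ v) :
    ((bk lam e v hv j p : ℕ) < r) ↔ ((e j p : ℕ) < r) := by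
  unfold bk
  split
  · next h =>
    split
    · exact iff_of_false (show ¬ v < r by omega) (by omega)
    · exact iff_of_false (show ¬ v + 1 < r by omega) (by omega)
  · exact Iff.rfl

lemma bk_lt_iff_high (hv : v + 1 < M) (j : Fin M) (p : Fin (lam j.rev)) {r : ℕ} (hr : v + 2 ≤ r) :
    ((bk lam e v hv j p : ℕ) < r) ↔ ((e j p : ℕ) < r) := by
  unfold bk
  split
  · next h =>
    split
    · exact iff_of_true (show v < r by omega) (by omega)
    · exact iff_of_true (show v + 1 < r by omega) (by omega)
  · exact Iff.rfl

lemma cnt_bk_low (hv : v + 1 < M) (j : Fin M) {r : ℕ} (hr : r ≤ v) :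
    cnt lam (bk lam e v hv) j r = cnt lam e j r := by
  unfold cnt
  congr 1
  exact Finset.filter_congr (fun p _ => bk_lt_iff_low lam e v hv j p hr)

lemma cnt_bk_high (hv : v + 1 < M) (j : Fin M) {r : ℕ} (hr : v + 2 ≤ r) :
    cnt lam (bk lam e v hv) j r = cnt lam e j r := by
  unfold cnt
  congr 1
  exact Finset.filter_congr (fun p _ => bk_lt_iff_high lam e v hv j p hr)

lemma cnt_bk_mid (hmono : Monotone lam) (he : IsSSYT lam e) (hv : v + 1 < M) (j : Fin M) :
    cnt lam (bk lam e v hv) j (v + 1) = newX lam e v j := by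
  apply cnt_eq_of_iff
  · exact le_trans (le_trans (newX_bounds lam e v hmono he j).2 (hiB_le_C lam e v j))
      (cnt_le_len lam e j (v + 2))
  · exact fun p => bk_lt_succ_iff lam e v hmono he hv j p

lemma bk_weak (he : IsSSYT lam e) (hv : v + 1 < M) :
    ∀ (j : Fin M) (p p' : Fin (lam j.rev)), p ≤ p' →
      bk lam e v hv j p ≤ bk lam e v hv j p' := by
  intro j p p' hpp'
  have hmono' := he.1 j p p' hpp'
  rw [Fin.le_def] at hmono' hpp'
  rw [Fin.le_def]
  unfold bk
  split_ifs <;> first | omega | (simp only [Fin.val_mk]; omega)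

lemma bk_cnt_adj (hmono : Monotone lam) (he : IsSSYT lam e) (hv : v + 1 < M)
    (j' : Fin M) (h0 : 0 < (j' : ℕ)) (r : ℕ) :
    cnt lam (bk lam e v hv) j' (r + 1) ≤
      cnt lam (bk lam e v hv)
        ⟨(j' : ℕ) - 1, lt_of_le_of_lt (Nat.sub_le _ _) j'.isLt⟩ r := by
  set pr : Fin M := ⟨(j' : ℕ) - 1, lt_of_le_of_lt (Nat.sub_le _ _) j'.isLt⟩ with hpr
  have hprlt : pr < j' := by rw [Fin.lt_def]; show (j' : ℕ) - 1 < (j' : ℕ); omega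
  rcases Nat.lt_or_ge r v with h1 | h1
  · rw [cnt_bk_low lam e v hv j' (show r + 1 ≤ v by omega),
      cnt_bk_low lam e v hv pr (show r ≤ v by omega)]
    exact cnt_pair' lam e hmono he hprlt r
  rcases Nat.eq_or_lt_of_le h1 with h2 | h2
  · -- r = v
    subst h2
    rw [cnt_bk_mid lam e v hmono he hv j', cnt_bk_low lam e v hv pr le_rfl]
    refine le_trans (newX_bounds lam e v hmono he j').2 ?_
    unfold hiB
    rw [dif_pos h0]
    exact min_le_right _ _
  rcases Nat.eq_or_lt_of_le h2 with h3 | h3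
  · -- r = v + 1
    rw [← h3]
    rw [cnt_bk_high lam e v hv j' (show v + 2 ≤ v + 1 + 1 by omega),
      cnt_bk_mid lam e v hmono he hv pr]
    refine le_trans ?_ (newX_bounds lam e v hmono he pr).1
    unfold loB
    have hc : (pr : ℕ) + 1 < M := by show (j' : ℕ) - 1 + 1 < M; omega
    rw [dif_pos hc]
    have hj : (⟨(pr : ℕ) + 1, hc⟩ : Fin M) = j' :=
      Fin.ext (show (j' : ℕ) - 1 + 1 = (j' : ℕ) by omega)
    rw [hj]
    exact le_max_right _ _
  · -- r ≥ v + 2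
    rw [cnt_bk_high lam e v hv j' (show v + 2 ≤ r + 1 by omega),
      cnt_bk_high lam e v hv pr (show v + 2 ≤ r by omega)]
    exact cnt_pair' lam e hmono he hprlt r

lemma bk_ssyt (hmono : Monotone lam) (he : IsSSYT lam e) (hv : v + 1 < M) :
    IsSSYT lam (bk lam e v hv) := by
  refine ⟨bk_weak lam e v he hv, ?_⟩
  apply strict_of_adj lam _ hmono
  intro j' h0 p hp
  exact strict_of_cnt lam _ (bk_weak lam e v he hv)
    (fun r => bk_cnt_adj lam e v hmono he hv j' h0 r) p hp

lemma loB_bk (hmono : Monotone lam) (he : IsSSYT lam e) (hv : v + 1 < M) (j : Fin M) :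
    loB lam (bk lam e v hv) v j = loB lam e v j := by
  unfold loB
  rw [cnt_bk_low lam e v hv j le_rfl]
  congr 1
  split
  · next h => exact cnt_bk_high lam e v hv _ le_rfl
  · rfl

lemma hiB_bk (hmono : Monotone lam) (he : IsSSYT lam e) (hv : v + 1 < M) (j : Fin M) :
    hiB lam (bk lam e v hv) v j = hiB lam e v j := by
  unfold hiB
  split
  · next h =>
    rw [cnt_bk_high lam e v hv j le_rfl, cnt_bk_low lam e v hv _ le_rfl]
  · rw [cnt_bk_high lam e v hv j le_rfl]

lemma newX_bk (hmono : Monotone lam) (he : IsSSYT lam e) (hv : v + 1 < M) (j : Fin M) :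
    newX lam (bk lam e v hv) v j = cnt lam e j (v + 1) := by
  unfold newX
  rw [loB_bk lam e v hmono he hv j, hiB_bk lam e v hmono he hv j,
    cnt_bk_mid lam e v hmono he hv j]
  have h1 := loB_le lam e v hmono he j
  have h2 := le_hiB lam e v hmono he j
  unfold newX
  omega

lemma bk_bk (hmono : Monotone lam) (he : IsSSYT lam e) (hv : v + 1 < M) :
    bk lam (bk lam e v hv) v hv = e := by
  funext j p
  have hblock : (v ≤ ((bk lam e v hv j p : ℕ)) ∧ ((bk lam e v hv j p : ℕ)) < v + 2)
      ↔ (v ≤ (e j p : ℕ) ∧ (e j p : ℕ) < v + 2) := by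
    rw [bk_eq lam e v hv j p]
    split_ifs with hb hs
    · exact iff_of_true (show v ≤ v ∧ v < v + 2 from ⟨le_rfl, by omega⟩) hb
    · exact iff_of_true (show v ≤ v + 1 ∧ v + 1 < v + 2 from ⟨by omega, by omega⟩) hb
    · exact Iff.rfl
  rw [bk_eq lam (bk lam e v hv) v hv j p]
  by_cases hb : v ≤ (e j p : ℕ) ∧ (e j p : ℕ) < v + 2
  · rw [if_pos (hblock.mpr hb), newX_bk lam e v hmono he hv j]
    have hX : (p : ℕ) < cnt lam e j (v + 1) ↔ (e j p : ℕ) < v + 1 :=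
      lt_cnt_iff lam e he.1 j (v + 1) p
    split_ifs with h
    · have h' := hX.mp h
      exact Fin.ext (show v = (e j p : ℕ) by omega)
    · have h' : ¬ (e j p : ℕ) < v + 1 := fun hc => h (hX.mpr hc)
      exact Fin.ext (show v + 1 = (e j p : ℕ) by omega)
  · rw [if_neg (fun hc => hb (hblock.mp hc))]
    rw [bk_eq lam e v hv j p, if_neg hb]

lemma card_eq_cnt (j : Fin M) (k : Fin M) (r : ℕ) (hr : (k : ℕ) = r) :
    (Finset.univ.filter fun p : Fin (lam j.rev) => e j p = k).card
      = cnt lam e j (r + 1) - cnt lam e j r := by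
  subst hr
  have hsub : (Finset.univ.filter fun p : Fin (lam j.rev) => (e j p : ℕ) < (k : ℕ))
      ⊆ (Finset.univ.filter fun p : Fin (lam j.rev) => (e j p : ℕ) < (k : ℕ) + 1) := by
    intro p hp
    simp only [Finset.mem_filter, Finset.mem_univ, true_and] at *
    omega
  rw [cnt, cnt, ← Finset.card_sdiff_of_subset hsub]
  congr 1
  ext p
  simp only [Finset.mem_sdiff, Finset.mem_filter, Finset.mem_univ, true_and, Fin.ext_iff]
  omega

/-- extension of `cnt` to natural row indices, zero out of range. -/
def cntN (r : ℕ) (n : ℕ) : ℕ := if h : n < M then cnt lam e ⟨n, h⟩ r else 0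

lemma cntN_eq (j : Fin M) (r : ℕ) : cntN lam e r (j : ℕ) = cnt lam e j r := by
  unfold cntN
  rw [dif_pos j.isLt, Fin.eta]

lemma sum_lo_hi (hM : 0 < M) :
    (∑ j : Fin M, loB lam e v j) + (∑ j : Fin M, hiB lam e v j)
      = (∑ j : Fin M, cnt lam e j v) + (∑ j : Fin M, cnt lam e j (v + 2)) := by
  obtain ⟨m, rfl⟩ : ∃ m, M = m + 1 := ⟨M - 1, by omega⟩
  have h1 : cntN lam e (v + 2) (m + 1) = 0 := by unfold cntN; rw [dif_neg (by omega)]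
  have hlo : (∑ j : Fin (m + 1), loB lam e v j)
      = (∑ n ∈ Finset.range m, max (cntN lam e v n) (cntN lam e (v + 2) (n + 1)))
        + cntN lam e v m := by
    have : (∑ j : Fin (m + 1), loB lam e v j)
        = ∑ n ∈ Finset.range (m + 1), max (cntN lam e v n) (cntN lam e (v + 2) (n + 1)) := by
      rw [← Fin.sum_univ_eq_sum_range]
      refine Finset.sum_congr rfl fun j _ => ?_
      unfold loB cntN
      rw [dif_pos j.isLt, Fin.eta]
    rw [this, Finset.sum_range_succ]
    congr 1
    rw [h1]
    exact Nat.max_eq_left (Nat.zero_le _)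
  have hhi : (∑ j : Fin (m + 1), hiB lam e v j)
      = (∑ n ∈ Finset.range m, min (cntN lam e (v + 2) (n + 1)) (cntN lam e v n))
        + cntN lam e (v + 2) 0 := by
    have : (∑ j : Fin (m + 1), hiB lam e v j)
        = ∑ n ∈ Finset.range (m + 1),
            (if n = 0 then cntN lam e (v + 2) 0
             else min (cntN lam e (v + 2) n) (cntN lam e v (n - 1))) := by
      rw [← Fin.sum_univ_eq_sum_range]
      refine Finset.sum_congr rfl fun j _ => ?_
      unfold hiB cntN
      by_cases h0 : 0 < (j : ℕ)
      · rw [dif_pos h0, if_neg (by omega), dif_pos j.isLt, Fin.eta,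
          dif_pos (show (j : ℕ) - 1 < m + 1 by omega)]
      · have hj0 : (j : ℕ) = 0 := by omega
        rw [dif_neg h0, if_pos hj0, dif_pos (show 0 < m + 1 by omega)]
        congr 1
        exact Fin.ext hj0
    rw [this, Finset.sum_range_succ']
    congr 1
  have hA : (∑ j : Fin (m + 1), cnt lam e j v)
      = (∑ n ∈ Finset.range m, cntN lam e v n) + cntN lam e v m :=
    calc (∑ j : Fin (m + 1), cnt lam e j v)
        = ∑ j : Fin (m + 1), cntN lam e v (j : ℕ) :=
          Finset.sum_congr rfl fun j _ => (cntN_eq lam e j v).symm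
      _ = ∑ n ∈ Finset.range (m + 1), cntN lam e v n := Fin.sum_univ_eq_sum_range _ _
      _ = (∑ n ∈ Finset.range m, cntN lam e v n) + cntN lam e v m :=
          Finset.sum_range_succ _ m
  have hC : (∑ j : Fin (m + 1), cnt lam e j (v + 2))
      = (∑ n ∈ Finset.range m, cntN lam e (v + 2) (n + 1)) + cntN lam e (v + 2) 0 :=
    calc (∑ j : Fin (m + 1), cnt lam e j (v + 2))
        = ∑ j : Fin (m + 1), cntN lam e (v + 2) (j : ℕ) :=
          Finset.sum_congr rfl fun j _ => (cntN_eq lam e j (v + 2)).symm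
      _ = ∑ n ∈ Finset.range (m + 1), cntN lam e (v + 2) n := Fin.sum_univ_eq_sum_range _ _
      _ = (∑ n ∈ Finset.range m, cntN lam e (v + 2) (n + 1)) + cntN lam e (v + 2) 0 :=
          Finset.sum_range_succ' _ m
  have h4 : (∑ n ∈ Finset.range m, max (cntN lam e v n) (cntN lam e (v + 2) (n + 1)))
      + (∑ n ∈ Finset.range m, min (cntN lam e (v + 2) (n + 1)) (cntN lam e v n))
      = (∑ n ∈ Finset.range m, cntN lam e v n)
        + (∑ n ∈ Finset.range m, cntN lam e (v + 2) (n + 1)) := by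
    rw [← Finset.sum_add_distrib, ← Finset.sum_add_distrib]
    refine Finset.sum_congr rfl fun n _ => ?_
    rw [min_comm, add_comm, min_add_max]
  rw [hlo, hhi, hA, hC]
  omega

lemma bk_filter_ne (hv : v + 1 < M) (k : Fin M) (h1 : (k : ℕ) ≠ v) (h2 : (k : ℕ) ≠ v + 1)
    (j : Fin M) :
    (Finset.univ.filter fun p : Fin (lam j.rev) => bk lam e v hv j p = k)
      = (Finset.univ.filter fun p : Fin (lam j.rev) => e j p = k) := by
  apply Finset.filter_congr
  intro p _
  rw [bk_eq lam e v hv j p]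
  split_ifs with hb hs
  · simp only [Fin.ext_iff, Fin.val_mk]; omega
  · simp only [Fin.ext_iff, Fin.val_mk]; omega
  · exact Iff.rfl

lemma bk_weight_v (hmono : Monotone lam) (he : IsSSYT lam e) (hv : v + 1 < M)
    (kv kw : Fin M) (hkv : (kv : ℕ) = v) (hkw : (kw : ℕ) = v + 1) :
    (∑ j : Fin M, (Finset.univ.filter fun p : Fin (lam j.rev) => bk lam e v hv j p = kv).card)
      = ∑ j : Fin M, (Finset.univ.filter fun p : Fin (lam j.rev) => e j p = kw).card := by
  have hM : 0 < M := by omega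
  have h5 : ∀ j, newX lam e v j + cnt lam e j (v + 1) = loB lam e v j + hiB lam e v j := by
    intro j
    have h1 := loB_le lam e v hmono he j
    have h2 := le_hiB lam e v hmono he j
    unfold newX
    omega
  have key : (∑ j : Fin M, newX lam e v j) + (∑ j : Fin M, cnt lam e j (v + 1))
      = (∑ j : Fin M, cnt lam e j v) + (∑ j : Fin M, cnt lam e j (v + 2)) :=
    calc (∑ j : Fin M, newX lam e v j) + (∑ j : Fin M, cnt lam e j (v + 1))
        = ∑ j : Fin M, (newX lam e v j + cnt lam e j (v + 1)) :=
          Finset.sum_add_distrib.symm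
      _ = ∑ j : Fin M, (loB lam e v j + hiB lam e v j) :=
          Finset.sum_congr rfl fun j _ => h5 j
      _ = (∑ j : Fin M, loB lam e v j) + (∑ j : Fin M, hiB lam e v j) :=
          Finset.sum_add_distrib
      _ = _ := sum_lo_hi lam e v hM
  have hAX : ∀ j, cnt lam e j v ≤ newX lam e v j := fun j =>
    le_trans (A_le_loB lam e v j) (newX_bounds lam e v hmono he j).1
  have hXC : ∀ j, cnt lam e j (v + 1) ≤ cnt lam e j (v + 2) := fun j =>
    cnt_mono lam e j (by omega)
  have e1 : (∑ j : Fin M, (newX lam e v j - cnt lam e j v)) + (∑ j : Fin M, cnt lam e j v)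
      = ∑ j : Fin M, newX lam e v j := by
    rw [← Finset.sum_add_distrib]
    exact Finset.sum_congr rfl fun j _ => Nat.sub_add_cancel (hAX j)
  have e2 : (∑ j : Fin M, (cnt lam e j (v + 2) - cnt lam e j (v + 1)))
      + (∑ j : Fin M, cnt lam e j (v + 1)) = ∑ j : Fin M, cnt lam e j (v + 2) := by
    rw [← Finset.sum_add_distrib]
    exact Finset.sum_congr rfl fun j _ => Nat.sub_add_cancel (hXC j)
  have hL : ∀ j : Fin M,
      (Finset.univ.filter fun p : Fin (lam j.rev) => bk lam e v hv j p = kv).card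
        = newX lam e v j - cnt lam e j v := by
    intro j
    rw [card_eq_cnt lam (bk lam e v hv) j kv v hkv,
      cnt_bk_mid lam e v hmono he hv j, cnt_bk_low lam e v hv j le_rfl]
  have hR : ∀ j : Fin M,
      (Finset.univ.filter fun p : Fin (lam j.rev) => e j p = kw).card
        = cnt lam e j (v + 2) - cnt lam e j (v + 1) := by
    intro j
    rw [card_eq_cnt lam e j kw (v + 1) hkw]
  rw [Finset.sum_congr rfl fun j _ => hL j, Finset.sum_congr rfl fun j _ => hR j]
  omega

lemma bk_weight_w (hmono : Monotone lam) (he : IsSSYT lam e) (hv : v + 1 < M)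
    (kv kw : Fin M) (hkv : (kv : ℕ) = v) (hkw : (kw : ℕ) = v + 1) :
    (∑ j : Fin M, (Finset.univ.filter fun p : Fin (lam j.rev) => bk lam e v hv j p = kw).card)
      = ∑ j : Fin M, (Finset.univ.filter fun p : Fin (lam j.rev) => e j p = kv).card := by
  have hM : 0 < M := by omega
  have h5 : ∀ j, newX lam e v j + cnt lam e j (v + 1) = loB lam e v j + hiB lam e v j := by
    intro j
    have h1 := loB_le lam e v hmono he j
    have h2 := le_hiB lam e v hmono he j
    unfold newX
    omega
  have key : (∑ j : Fin M, newX lam e v j) + (∑ j : Fin M, cnt lam e j (v + 1))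
      = (∑ j : Fin M, cnt lam e j v) + (∑ j : Fin M, cnt lam e j (v + 2)) :=
    calc (∑ j : Fin M, newX lam e v j) + (∑ j : Fin M, cnt lam e j (v + 1))
        = ∑ j : Fin M, (newX lam e v j + cnt lam e j (v + 1)) :=
          Finset.sum_add_distrib.symm
      _ = ∑ j : Fin M, (loB lam e v j + hiB lam e v j) :=
          Finset.sum_congr rfl fun j _ => h5 j
      _ = (∑ j : Fin M, loB lam e v j) + (∑ j : Fin M, hiB lam e v j) :=
          Finset.sum_add_distrib
      _ = _ := sum_lo_hi lam e v hM
  have hXC : ∀ j, newX lam e v j ≤ cnt lam e j (v + 2) := fun j =>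
    le_trans (newX_bounds lam e v hmono he j).2 (hiB_le_C lam e v j)
  have hAX : ∀ j, cnt lam e j v ≤ cnt lam e j (v + 1) := fun j =>
    cnt_mono lam e j (by omega)
  have e1 : (∑ j : Fin M, (cnt lam e j (v + 2) - newX lam e v j))
      + (∑ j : Fin M, newX lam e v j) = ∑ j : Fin M, cnt lam e j (v + 2) := by
    rw [← Finset.sum_add_distrib]
    exact Finset.sum_congr rfl fun j _ => Nat.sub_add_cancel (hXC j)
  have e2 : (∑ j : Fin M, (cnt lam e j (v + 1) - cnt lam e j v))
      + (∑ j : Fin M, cnt lam e j v) = ∑ j : Fin M, cnt lam e j (v + 1) := by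
    rw [← Finset.sum_add_distrib]
    exact Finset.sum_congr rfl fun j _ => Nat.sub_add_cancel (hAX j)
  have hL : ∀ j : Fin M,
      (Finset.univ.filter fun p : Fin (lam j.rev) => bk lam e v hv j p = kw).card
        = cnt lam e j (v + 2) - newX lam e v j := by
    intro j
    rw [card_eq_cnt lam (bk lam e v hv) j kw (v + 1) hkw,
      cnt_bk_mid lam e v hmono he hv j,
      cnt_bk_high lam e v hv j (show v + 2 ≤ v + 1 + 1 by omega)]
  have hR : ∀ j : Fin M,
      (Finset.univ.filter fun p : Fin (lam j.rev) => e j p = kv).card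
        = cnt lam e j (v + 1) - cnt lam e j v := by
    intro j
    exact card_eq_cnt lam e j kv v hkv
  rw [Finset.sum_congr rfl fun j _ => hL j, Finset.sum_congr rfl fun j _ => hR j]
  omega

end BKdefs

end BK

theorem ssyt_weight_swap_bijection (M : ℕ) (lam : Fin M → ℕ) (hlam : Monotone lam)
    (β : Fin M → ℕ) (hβ : ∑ i : Fin M, β i = ∑ i : Fin M, lam i)
    (i : Fin M) (hi : (i : ℕ) + 1 < M) :
    Nonempty
      ({T : SSYT M lam // T.weight = β} ≃
        {T : SSYT M lam // T.weight = β ∘ Equiv.swap i ⟨(i : ℕ) + 1, hi⟩}) ∧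
    Nat.card {T : SSYT M lam // T.weight = β} =
      Nat.card {T : SSYT M lam // T.weight = β ∘ Equiv.swap i ⟨(i : ℕ) + 1, hi⟩} := by
  classical
  set w : Fin M := ⟨(i : ℕ) + 1, hi⟩ with hw
  have hssyt : ∀ T : SSYT M lam, IsSSYT lam (BK.bk lam T.1 (i : ℕ) hi) := fun T =>
    BK.bk_ssyt lam T.1 (i : ℕ) hlam T.2 hi
  have hΦw : ∀ (T : SSYT M lam) (k : Fin M),
      SSYT.weight (⟨BK.bk lam T.1 (i : ℕ) hi, hssyt T⟩ : SSYT M lam) k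
        = SSYT.weight T (Equiv.swap i w k) := by
    intro T k
    by_cases hk1 : k = i
    · rw [hk1, Equiv.swap_apply_left]
      exact BK.bk_weight_v lam T.1 (i : ℕ) hlam T.2 hi i w rfl rfl
    · by_cases hk2 : k = w
      · rw [hk2, Equiv.swap_apply_right]
        exact BK.bk_weight_w lam T.1 (i : ℕ) hlam T.2 hi i w rfl rfl
      · rw [Equiv.swap_apply_of_ne_of_ne hk1 hk2]
        exact Finset.sum_congr rfl fun j _ => by
          rw [BK.bk_filter_ne lam T.1 (i : ℕ) hi k
            (fun h => hk1 (Fin.ext h)) (fun h => hk2 (Fin.ext h)) j]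
  have hinv : ∀ T : SSYT M lam,
      BK.bk lam (BK.bk lam T.1 (i : ℕ) hi) (i : ℕ) hi = T.1 := fun T =>
    BK.bk_bk lam T.1 (i : ℕ) hlam T.2 hi
  have hcomp : ∀ T : SSYT M lam,
      SSYT.weight (⟨BK.bk lam T.1 (i : ℕ) hi, hssyt T⟩ : SSYT M lam)
        = T.weight ∘ Equiv.swap i w := fun T => funext (hΦw T)
  let E : {T : SSYT M lam // T.weight = β} ≃
      {T : SSYT M lam // T.weight = β ∘ Equiv.swap i w} :=
    { toFun := fun T => ⟨⟨BK.bk lam T.1.1 (i : ℕ) hi, hssyt T.1⟩, by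
        rw [hcomp T.1, T.2]⟩
      invFun := fun T => ⟨⟨BK.bk lam T.1.1 (i : ℕ) hi, hssyt T.1⟩, by
        rw [hcomp T.1, T.2]
        funext k
        simp only [Function.comp_apply, Equiv.swap_apply_self]⟩
      left_inv := fun T => Subtype.ext (Subtype.ext (hinv T.1))
      right_inv := fun T => Subtype.ext (Subtype.ext (hinv T.1)) }
  exact ⟨⟨E⟩, Nat.card_congr E⟩
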